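/- For every N ≥ 1 and every real R ≥ 2, the probability measure on ℝ² with density φ^{1,N} has a sub-Gaussian tail uniformly in N: ∫_{|z| ≥ R} π^{−1} e^{−N|z|²} e_N(N|z|²) dz ≤ 4 e^{−R²/2}. -/

import Mathlib

open MeasureTheory Real

/-- Truncated exponential series `e_N(t) = ∑_{ℓ=0}^{N-1} tˡ/ℓ!`. -/
noncomputable def eN (N : ℕ) (t : ℝ) : ℝ := ∑ ℓ ∈ Finset.range N, t ^ ℓ / (Nat.factorial ℓ)

/-- One-particle marginal density `φ^{1,N}(z) = π⁻¹ e^{-N|z|²} e_N(N|z|²)` on `ℝ²`. -/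
noncomputable def phi1 (N : ℕ) (z : EuclideanSpace ℝ (Fin 2)) : ℝ :=
  (Real.pi)⁻¹ * Real.exp (-(N : ℝ) * ‖z‖ ^ 2) * eN N ((N : ℝ) * ‖z‖ ^ 2)

lemma eN_nonneg (N : ℕ) {t : ℝ} (ht : 0 ≤ t) : 0 ≤ eN N t :=
  Finset.sum_nonneg fun ℓ _ => by positivity

lemma phi1_nonneg (N : ℕ) (z : EuclideanSpace ℝ (Fin 2)) : 0 ≤ phi1 N z := by
  have h := eN_nonneg N (t := (N : ℝ) * ‖z‖ ^ 2) (by positivity)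
  unfold phi1
  positivity

/-- Chernoff-type bound: for `t ≥ 1` and `N ≥ 1`, `e^{-Nt} e_N(Nt) ≤ e^{1-t}`. -/
lemma key_bound (N : ℕ) (hN : 1 ≤ N) {t : ℝ} (ht : 1 ≤ t) :
    Real.exp (-(N : ℝ) * t) * eN N ((N : ℝ) * t) ≤ Real.exp (1 - t) := by
  have ht0 : 0 < t := lt_of_lt_of_le one_pos ht
  have h1 : eN N ((N : ℝ) * t) ≤ t ^ (N - 1) * Real.exp N := by
    unfold eN
    have : ∀ ℓ ∈ Finset.range N, ((N : ℝ) * t) ^ ℓ / (Nat.factorial ℓ)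
        ≤ t ^ (N - 1) * ((N : ℝ) ^ ℓ / (Nat.factorial ℓ)) := by
      intro ℓ hℓ
      rw [Finset.mem_range] at hℓ
      have hle : ℓ ≤ N - 1 := Nat.le_sub_one_of_lt hℓ
      have htp : t ^ ℓ ≤ t ^ (N - 1) := pow_le_pow_right₀ ht hle
      rw [mul_pow, div_eq_mul_inv, div_eq_mul_inv]
      have hfac : (0:ℝ) ≤ ((Nat.factorial ℓ : ℝ))⁻¹ := by positivity
      have hNp : (0:ℝ) ≤ (N:ℝ)^ℓ := by positivity
      calc (N:ℝ)^ℓ * t^ℓ * ((Nat.factorial ℓ : ℝ))⁻¹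
          ≤ (N:ℝ)^ℓ * t^(N-1) * ((Nat.factorial ℓ : ℝ))⁻¹ := by
            apply mul_le_mul_of_nonneg_right (mul_le_mul_of_nonneg_left htp hNp) hfac
        _ = t^(N-1) * ((N:ℝ)^ℓ * ((Nat.factorial ℓ : ℝ))⁻¹) := by ring
    calc ∑ ℓ ∈ Finset.range N, ((N : ℝ) * t) ^ ℓ / (Nat.factorial ℓ)
        ≤ ∑ ℓ ∈ Finset.range N, t ^ (N - 1) * ((N : ℝ) ^ ℓ / (Nat.factorial ℓ)) :=
          Finset.sum_le_sum this
      _ = t ^ (N - 1) * ∑ ℓ ∈ Finset.range N, (N : ℝ) ^ ℓ / (Nat.factorial ℓ) := by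
          rw [Finset.mul_sum]
      _ ≤ t ^ (N - 1) * Real.exp N := by
          apply mul_le_mul_of_nonneg_left (Real.sum_le_exp_of_nonneg (by positivity) N)
          positivity
  set a : ℝ := t * Real.exp (1 - t) with ha
  have ha0 : 0 ≤ a := by positivity
  have ha1 : a ≤ 1 := by
    have := Real.add_one_le_exp (t - 1)
    have h2 : t ≤ Real.exp (t - 1) := by linarith
    calc a = t * Real.exp (1 - t) := rfl
      _ ≤ Real.exp (t - 1) * Real.exp (1 - t) :=
          mul_le_mul_of_nonneg_right h2 (Real.exp_nonneg _)
      _ = 1 := by rw [← Real.exp_add]; norm_num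
  have hpow : a ^ N ≤ a ^ 1 := pow_le_pow_of_le_one ha0 ha1 hN
  have haN : a ^ N = t ^ N * Real.exp (N : ℝ) * Real.exp (-(N:ℝ) * t) := by
    rw [ha, mul_pow, ← Real.exp_nat_mul,
      show (N:ℝ) * (1 - t) = (N:ℝ) + (-(N:ℝ) * t) by ring, Real.exp_add, mul_assoc]
  have htN : t ^ N = t ^ (N - 1) * t := by
    rw [← pow_succ, Nat.sub_add_cancel hN]
  calc Real.exp (-(N : ℝ) * t) * eN N ((N : ℝ) * t)
      ≤ Real.exp (-(N : ℝ) * t) * (t ^ (N - 1) * Real.exp N) :=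
        mul_le_mul_of_nonneg_left h1 (Real.exp_nonneg _)
    _ = a ^ N / t := by rw [haN, htN]; field_simp
    _ ≤ a ^ 1 / t := by gcongr
    _ = Real.exp (1 - t) := by rw [pow_one, ha]; field_simp

/-- Uniform sub-Gaussian tail: `P^{1,N}(|z| ≥ R) ≤ 4 e^{-R²/2}` for all `N ≥ 1`, `R ≥ 2`. -/
theorem stmt17 (N : ℕ) (hN : 1 ≤ N) (R : ℝ) (hR : 2 ≤ R) :
    ∫ z in {z : EuclideanSpace ℝ (Fin 2) | R ≤ ‖z‖}, phi1 N z
      ≤ 4 * Real.exp (-R ^ 2 / 2) := by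
  set S : Set (EuclideanSpace ℝ (Fin 2)) := {z | R ≤ ‖z‖} with hSdef
  have hS : MeasurableSet S := (isClosed_le continuous_const continuous_norm).measurableSet
  set g : EuclideanSpace ℝ (Fin 2) → ℝ :=
    fun z => Real.exp (-R ^ 2 / 2) * (Real.pi⁻¹ * Real.exp (-(1/4 : ℝ) * ‖z‖ ^ 2)) with hgdef
  -- integrability of the Gaussian
  have hgauss : Integrable (fun v : EuclideanSpace ℝ (Fin 2) =>
      Real.exp (-(1/4 : ℝ) * ‖v‖ ^ 2)) := by
    have h2 := (GaussianFourier.integrable_cexp_neg_mul_sq_norm_add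
      (V := EuclideanSpace ℝ (Fin 2)) (b := (1/4:ℂ)) (by norm_num) 0 0).norm
    convert h2 using 2 with v
    simp only [zero_mul, add_zero, Complex.norm_exp]
    congr 1
    simp [Complex.mul_re, Complex.ofReal_pow]
    rw [← Complex.ofReal_pow, Complex.ofReal_re]
  have hg : Integrable g := (hgauss.const_mul _).const_mul _
  -- pointwise bound
  have hle : ∀ z, S.indicator (phi1 N) z ≤ g z := by
    intro z
    by_cases hz : z ∈ S
    · rw [Set.indicator_of_mem hz]
      have hzR : R ≤ ‖z‖ := hz
      have ht1 : 1 ≤ ‖z‖ ^ 2 := by nlinarith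
      have hb := key_bound N hN ht1
      have hexp : Real.exp (1 - ‖z‖ ^ 2)
          ≤ Real.exp (-R ^ 2 / 2) * Real.exp (-(1/4 : ℝ) * ‖z‖ ^ 2) := by
        rw [← Real.exp_add]
        apply Real.exp_le_exp.2
        nlinarith
      calc phi1 N z = Real.pi⁻¹ * (Real.exp (-(N : ℝ) * ‖z‖ ^ 2) * eN N ((N : ℝ) * ‖z‖ ^ 2)) := by
            unfold phi1; ring
        _ ≤ Real.pi⁻¹ * Real.exp (1 - ‖z‖ ^ 2) := by
            apply mul_le_mul_of_nonneg_left hb (by positivity)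
        _ ≤ Real.pi⁻¹ * (Real.exp (-R ^ 2 / 2) * Real.exp (-(1/4 : ℝ) * ‖z‖ ^ 2)) := by
            apply mul_le_mul_of_nonneg_left hexp (by positivity)
        _ = g z := by rw [hgdef]; ring
    · rw [Set.indicator_of_notMem hz]
      rw [hgdef]
      positivity
  have h0 : ∀ z, 0 ≤ S.indicator (phi1 N) z :=
    fun z => Set.indicator_nonneg (fun y _ => phi1_nonneg N y) z
  rw [← integral_indicator hS]
  have hmono : ∫ z, S.indicator (phi1 N) z ≤ ∫ z, g z :=
    integral_mono_of_nonneg (Filter.Eventually.of_forall h0) hg (Filter.Eventually.of_forall hle)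
  refine hmono.trans ?_
  have hval : ∫ v : EuclideanSpace ℝ (Fin 2), Real.exp (-(1/4 : ℝ) * ‖v‖ ^ 2) = 4 * Real.pi := by
    have h := GaussianFourier.integral_rexp_neg_mul_sq_norm
      (V := EuclideanSpace ℝ (Fin 2)) (b := (1/4:ℝ)) (by norm_num)
    rw [h]
    have : Module.finrank ℝ (EuclideanSpace ℝ (Fin 2)) = 2 := by
      simp [finrank_euclideanSpace]
    rw [this]
    norm_num [Real.rpow_one]
    ring
  rw [hgdef]
  rw [MeasureTheory.integral_const_mul, MeasureTheory.integral_const_mul, hval]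
  have hπ : Real.pi⁻¹ * (4 * Real.pi) = 4 := by
    field_simp
  rw [hπ]
  ring_nf
  exact le_refl _
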